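/- Let p > 5 be a prime. If p ≢ 1 and p ≢ 19 (mod 30), then λ(3, 5; p) = 0. If p ≡ 1 or 19 (mod 30), then there exist integers x, y with p = x² + 15y², and for any such x, y one has λ(3, 5; p) = 4x² − 2p. -/

import Mathlib

private lemma sqe (x n : ℤ) : x^2 % n = (x%n) * (x%n) % n := by rw [pow_two, Int.mul_emod]

private lemma sq3 (x : ℤ) : (x^2 % 3 = 0 ∧ x % 3 = 0) ∨ x^2 % 3 = 1 := by
  have e := sqe x 3
  have h : x % 3 = 0 ∨ x % 3 = 1 ∨ x % 3 = 2 := by omega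
  rcases h with h|h|h <;> rw [h] at e <;> norm_num at e <;> omega

private lemma sq5 (x : ℤ) : (x^2 % 5 = 0 ∧ x % 5 = 0) ∨ x^2 % 5 = 1 ∨ x^2 % 5 = 4 := by
  have e := sqe x 5
  have h : x % 5 = 0 ∨ x % 5 = 1 ∨ x % 5 = 2 ∨ x % 5 = 3 ∨ x % 5 = 4 := by omega
  rcases h with h|h|h|h|h <;> rw [h] at e <;> norm_num at e <;> omega

private lemma sq8 (x : ℤ) (hx : x % 2 = 1) : x^2 % 8 = 1 := by
  have e := sqe x 8
  have h : x % 8 = 1 ∨ x % 8 = 3 ∨ x % 8 = 5 ∨ x % 8 = 7 := by omega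
  rcases h with h|h|h|h <;> rw [h] at e <;> norm_num at e <;> omega

private lemma sq4e (x : ℤ) (hx : x % 2 = 0) : x^2 % 4 = 0 := by
  have e := sqe x 4
  have h : x % 4 = 0 ∨ x % 4 = 2 := by omega
  rcases h with h|h <;> rw [h] at e <;> norm_num at e <;> omega

private lemma sqpar (x : ℤ) : x^2 % 2 = x % 2 := by
  have e := sqe x 2
  have h : x % 2 = 0 ∨ x % 2 = 1 := by omega
  rcases h with h|h <;> rw [h] at e <;> norm_num at e <;> omega

-- Thue's lemma
private lemma thue (p : ℕ) (hp : p.Prime) (c : ℤ) :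
    ∃ a b : ℤ, (p:ℤ) ∣ (a - c*b) ∧ a^2 < p ∧ b^2 < p ∧ ¬(a = 0 ∧ b = 0) := by
  haveI := Fact.mk hp
  set r : ℕ := Nat.sqrt p with hr
  have hrlt : r * r < p := by
    refine lt_of_le_of_ne (Nat.sqrt_le p) fun h => ?_
    have hdvd : r ∣ p := ⟨r, h.symm⟩
    rcases hp.eq_one_or_self_of_dvd r hdvd with h1 | h1
    · rw [h1] at h; have := hp.two_le; omega
    · rw [h1] at h; have := hp.two_le; nlinarith
  have hcard : Fintype.card (ZMod p) <
      ((Finset.Icc (0:ℤ) r) ×ˢ (Finset.Icc (0:ℤ) r)).card := by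
    rw [ZMod.card, Finset.card_product, Int.card_Icc]
    have : ((r:ℤ) + 1 - 0).toNat = r + 1 := by omega
    rw [this]
    have := Nat.lt_succ_sqrt p
    simpa [Nat.succ_eq_add_one, hr] using this
  obtain ⟨x1, h1, x2, h2, hne, heq⟩ :=
    Finset.exists_ne_map_eq_of_card_lt_of_maps_to hcard
      (f := fun ab : ℤ × ℤ => (ab.1 : ZMod p) - c * ab.2)
      (fun x _ => Finset.mem_univ _)
  obtain ⟨a1, b1⟩ := x1
  obtain ⟨a2, b2⟩ := x2
  simp only [Finset.mem_product, Finset.mem_Icc] at h1 h2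
  simp only at heq
  refine ⟨a1 - a2, b1 - b2, ?_, ?_, ?_, ?_⟩
  · rw [← ZMod.intCast_zmod_eq_zero_iff_dvd]
    push_cast
    rw [sub_eq_zero]
    linear_combination heq
  · have h1a := h1.1; have h2a := h2.1
    have hle : a1 - a2 ≤ (r:ℤ) := by omega
    have hge : -(r:ℤ) ≤ a1 - a2 := by omega
    have : (a1-a2)^2 ≤ (r:ℤ)*(r:ℤ) := by nlinarith
    have : ((r:ℤ))*(r:ℤ) < (p:ℤ) := by exact_mod_cast hrlt
    omega
  · have h1b := h1.2; have h2b := h2.2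
    have hle : b1 - b2 ≤ (r:ℤ) := by omega
    have hge : -(r:ℤ) ≤ b1 - b2 := by omega
    have : (b1-b2)^2 ≤ (r:ℤ)*(r:ℤ) := by nlinarith
    have : ((r:ℤ))*(r:ℤ) < (p:ℤ) := by exact_mod_cast hrlt
    omega
  · rintro ⟨ha, hb⟩
    exact hne (by rw [Prod.mk.injEq]; omega)

private lemma isSq_neg3 (p : ℕ) [Fact p.Prime] (hp5 : 5 < p) (h3 : p % 3 = 1) :
    IsSquare (-3 : ZMod p) := by
  have hp2 : p ≠ 2 := by omega
  have hmod2 : p % 2 = 1 := Nat.odd_iff.mp ((Fact.out : p.Prime).odd_of_ne_two hp2)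
  have hne : ((-3 : ℤ) : ZMod p) ≠ 0 := by
    rw [Ne, ZMod.intCast_zmod_eq_zero_iff_dvd]
    intro h
    have h' : (p:ℤ) ∣ 3 := (dvd_neg.mp h)
    have := Int.le_of_dvd (by norm_num) h'
    omega
  have h1 : legendreSym p (-3) = legendreSym p (-1) * legendreSym p 3 := by
    rw [← legendreSym.mul]; norm_num
  have h2 : legendreSym p (-1) = (-1)^(p/2) := by
    rw [legendreSym.at_neg_one hp2, ZMod.χ₄_eq_neg_one_pow hmod2]
  have h3' : legendreSym 3 (p : ℤ) = 1 := by
    haveI : Fact (Nat.Prime 3) := ⟨by norm_num⟩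
    rw [legendreSym.mod]
    have hm : ((p:ℤ) % (3:ℕ)) = 1 := by omega
    rw [hm]
    refine (legendreSym.eq_one_iff 3 ?_).mpr ?_
    · norm_num
    · simp [IsSquare.one]
  have h4 : legendreSym p 3 = (-1)^(p/2) := by
    haveI : Fact (Nat.Prime 3) := ⟨by norm_num⟩
    have := legendreSym.quadratic_reciprocity' (p := 3) (q := p) (by norm_num) hp2
    have h30 : ((3:ℕ):ℤ) = 3 := by norm_num
    rw [h30] at this
    rw [this, h3']
    norm_num
  have h5 : legendreSym p (-3) = 1 := by
    rw [h1, h2, h4, ← mul_pow]; norm_num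
  have := (legendreSym.eq_one_iff p hne).mp h5
  simpa using this

private lemma isSq_5 (p : ℕ) [Fact p.Prime] (hp5 : 5 < p) (h5 : p % 5 = 1 ∨ p % 5 = 4) :
    IsSquare (5 : ZMod p) := by
  haveI : Fact (Nat.Prime 5) := ⟨by norm_num⟩
  have hp2 : p ≠ 2 := by omega
  have hiff := ZMod.exists_sq_eq_prime_iff_of_mod_four_eq_one (p := 5) (q := p) (by norm_num) hp2
  have hsq : IsSquare ((p : ℕ) : ZMod 5) := by
    rw [← ZMod.natCast_mod]
    rcases h5 with h|h <;> rw [h]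
    · simpa using isSquare_one
    · exact ⟨2, rfl⟩
  have := hiff.mp hsq
  simpa using this

private lemma exists_c (p : ℕ) (hp : p.Prime) (hp5 : 5 < p) (h3 : p % 3 = 1)
    (h5 : p % 5 = 1 ∨ p % 5 = 4) : ∃ c : ℤ, (p:ℤ) ∣ c^2 + 15 := by
  haveI := Fact.mk hp
  obtain ⟨c, hc⟩ := isSq_neg3 p hp5 h3
  obtain ⟨d, hd⟩ := isSq_5 p hp5 h5
  refine ⟨(((c*d : ZMod p).val : ℕ) : ℤ), ?_⟩
  rw [← ZMod.intCast_zmod_eq_zero_iff_dvd]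
  push_cast
  rw [ZMod.natCast_val, ZMod.cast_id]
  have : (c*d)^2 = (-3) * 5 := by rw [mul_pow, pow_two, pow_two, ← hc, ← hd]
  rw [this]; norm_num
private lemma getk (p : ℕ) (hp : p.Prime) (hc : ∃ c : ℤ, (p:ℤ) ∣ c^2 + 15) :
    ∃ x y k : ℤ, 1 ≤ k ∧ k ≤ 15 ∧ x^2 + 15*y^2 = k * p := by
  obtain ⟨c, hc⟩ := hc
  obtain ⟨a, b, hdvd, ha, hb, hnz⟩ := thue p hp c
  have key : a^2 + 15*b^2 = (a - c*b)*(a + c*b) + (c^2+15)*b^2 := by ring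
  have hdv : (p:ℤ) ∣ a^2 + 15*b^2 := by
    rw [key]
    exact dvd_add (hdvd.mul_right _) (hc.mul_right _)
  obtain ⟨k, hk⟩ := hdv
  have hpos : 0 < a^2 + 15*b^2 := by
    rcases (by tauto : a ≠ 0 ∨ b ≠ 0) with h0 | h0
    · have h1 : 0 < a^2 := lt_of_le_of_ne (sq_nonneg a) (Ne.symm (pow_ne_zero 2 h0))
      nlinarith [sq_nonneg b]
    · have h1 : 0 < b^2 := lt_of_le_of_ne (sq_nonneg b) (Ne.symm (pow_ne_zero 2 h0))
      nlinarith [sq_nonneg a]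
  have hp0 : (0:ℤ) < p := by exact_mod_cast hp.pos
  refine ⟨a, b, k, ?_, ?_, by rw [hk]; ring⟩
  · nlinarith
  · nlinarith

private lemma desc4 (P x y : ℤ) (hP2 : P % 2 = 1) (h : x^2 + 15*y^2 = 4*P) :
    ∃ a b : ℤ, P = a^2 + 15*b^2 := by
  rcases (by omega : x % 2 = 0 ∨ x % 2 = 1) with hx|hx <;>
    rcases (by omega : y % 2 = 0 ∨ y % 2 = 1) with hy|hy
  · obtain ⟨k, hk⟩ : ∃ k, x = 2*k := ⟨x/2, by omega⟩
    obtain ⟨m, hm⟩ : ∃ m, y = 2*m := ⟨y/2, by omega⟩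
    subst hk hm
    refine ⟨k, m, ?_⟩
    ring_nf at h ⊢
    linarith
  · have h1 := sq4e x hx
    have h2 := sq8 y hy
    omega
  · have h1 := sq8 x hx
    have h2 := sq4e y hy
    omega
  · have h1 := sq8 x hx
    have h2 := sq8 y hy
    omega

private lemma desc2 (P u v : ℤ) (hP2 : P % 2 = 1) (h : 3*u^2 + 5*v^2 = 2*P) :
    ∃ a b : ℤ, P = a^2 + 15*b^2 := by
  have hu := sqpar u
  have hv := sqpar v
  have hpar : u % 2 = v % 2 := by omega
  obtain ⟨X, hX⟩ : ∃ X, 3*u + 5*v = 2*X := ⟨(3*u+5*v)/2, by omega⟩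
  obtain ⟨Y, hY⟩ : ∃ Y, u - v = 2*Y := ⟨(u-v)/2, by omega⟩
  have key : (3*u+5*v)^2 + 15*(u-v)^2 = 8*(3*u^2+5*v^2) := by ring
  rw [hX, hY, h] at key
  apply desc4 P X Y hP2
  ring_nf at key ⊢
  linarith

private lemma repr15 (p : ℕ) (hp : p.Prime) (hp5 : 5 < p) (h3 : p % 3 = 1)
    (h5 : p % 5 = 1 ∨ p % 5 = 4) : ∃ a b : ℤ, (p:ℤ) = a^2 + 15*b^2 := by
  obtain ⟨x, y, k, hk1, hk15, hxy⟩ := getk p hp (exists_c p hp hp5 h3 h5)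
  have hp2n : p % 2 = 1 := Nat.odd_iff.mp (hp.odd_of_ne_two (by omega))
  have hp2 : (p:ℤ) % 2 = 1 := by omega
  have h3' : (p:ℤ) % 3 = 1 := by omega
  have h5' : (p:ℤ) % 5 = 1 ∨ (p:ℤ) % 5 = 4 := by omega
  have s3x := sq3 x
  have s5x := sq5 x
  interval_cases k
  · exact ⟨x, y, by linarith⟩
  · exfalso; omega
  · exfalso; omega
  · exact desc4 p x y hp2 (by linarith)
  · exfalso; omega
  · -- k = 6
    have hx3 : x % 3 = 0 := by omega
    obtain ⟨x', hx'⟩ : ∃ x', x = 3*x' := ⟨x/3, by omega⟩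
    subst hx'
    apply desc2 p x' y hp2
    ring_nf at hxy ⊢
    linarith
  · exfalso; omega
  · exfalso; omega
  · -- k = 9
    have hx3 : x % 3 = 0 := by omega
    obtain ⟨x', hx'⟩ : ∃ x', x = 3*x' := ⟨x/3, by omega⟩
    subst hx'
    have s3y := sq3 y
    have hy3 : y % 3 = 0 := by
      have h9 : 9*x'^2 + 15*y^2 = 9*(p:ℤ) := by linarith
      omega
    obtain ⟨y', hy'⟩ : ∃ y', y = 3*y' := ⟨y/3, by omega⟩
    subst hy'
    refine ⟨x', y', ?_⟩
    ring_nf at hxy ⊢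
    linarith
  · -- k = 10
    have hx5 : x % 5 = 0 := by omega
    obtain ⟨x', hx'⟩ : ∃ x', x = 5*x' := ⟨x/5, by omega⟩
    subst hx'
    apply desc2 p y x' hp2
    ring_nf at hxy ⊢
    linarith
  · exfalso; omega
  · exfalso; omega
  · exfalso; omega
  · exfalso; omega
  · -- k = 15
    have hx3 : x % 3 = 0 := by omega
    have hx5 : x % 5 = 0 := by omega
    obtain ⟨x', hx'⟩ : ∃ x', x = 15*x' := ⟨x/15, by omega⟩
    subst hx'
    refine ⟨y, x', ?_⟩
    ring_nf at hxy ⊢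
    linarith
private lemma solveCase (P a b x y : ℤ) (hP : Prime P) (hPx : ¬ P ∣ x)
    (hab : P = a^2 + 15*b^2) (hxy : 3*x^2 + 5*y^2 = 8*P)
    (hdvd : P ∣ (x*a + 5*y*b)) :
    ∃ c d : ℤ, (c = 1 ∨ c = -1) ∧ (d = 1 ∨ d = -1) ∧ x = a*c - 5*b*d ∧ y = 3*b*c + a*d := by
  have hP0 : P ≠ 0 := hP.ne_zero
  obtain ⟨C, hC⟩ := hdvd
  have hxY : x * (y*a - 3*x*b) = P * (y*C - 8*b) := by
    linear_combination (-b) * hxy + y * hC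
  have hYdvd : P ∣ (y*a - 3*x*b) := by
    have : P ∣ x * (y*a - 3*x*b) := ⟨y*C - 8*b, hxY⟩
    exact (hP.dvd_mul.mp this).resolve_left hPx
  obtain ⟨D, hD⟩ := hYdvd
  have hsq : P^2 * (3*C^2 + 5*D^2) = P^2 * 8 := by
    have id1 : 3*(x*a+5*y*b)^2 + 5*(y*a-3*x*b)^2 = (3*x^2+5*y^2)*(a^2+15*b^2) := by ring
    rw [hC, hD, hxy, ← hab] at id1
    linear_combination id1
  have hcd : 3*C^2 + 5*D^2 = 8 := mul_left_cancel₀ (pow_ne_zero 2 hP0) hsq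
  have hC2 : C^2 ≤ 2 := by nlinarith [sq_nonneg D]
  have hD2 : D^2 ≤ 1 := by nlinarith [sq_nonneg C]
  have hC1 : C^2 = 1 ∧ D^2 = 1 := by omega
  have hCor : C = 1 ∨ C = -1 := by
    have h0 : (C-1)*(C+1) = 0 := by linear_combination hC1.1
    rcases mul_eq_zero.mp h0 with h|h
    · left; omega
    · right; omega
  have hDor : D = 1 ∨ D = -1 := by
    have h0 : (D-1)*(D+1) = 0 := by linear_combination hC1.2
    rcases mul_eq_zero.mp h0 with h|h
    · left; omega
    · right; omega
  refine ⟨C, D, hCor, hDor, ?_, ?_⟩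
  · have hxP : x * P = (a*C - 5*b*D) * P := by
      linear_combination a * hC - 5*b*hD + x * hab
    exact mul_right_cancel₀ hP0 hxP
  · have hyP : y * P = (3*b*C + a*D) * P := by
      linear_combination 3*b*hC + a*hD + y * hab
    exact mul_right_cancel₀ hP0 hyP

private lemma classify (p : ℕ) (hp : p.Prime) (hp5 : 5 < p) (a b x y : ℤ)
    (hab : (p:ℤ) = a^2 + 15*b^2) (hxy : 3*x^2 + 5*y^2 = 8*(p:ℤ)) :
    ∃ c d : ℤ, (c = 1 ∨ c = -1) ∧ (d = 1 ∨ d = -1) ∧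
      ((x = a*c - 5*b*d ∧ y = 3*b*c + a*d) ∨ (x = a*c + 5*b*d ∧ y = -(3*b*c) + a*d)) := by
  have hP : Prime ((p:ℤ)) := Nat.prime_iff_prime_int.mp hp
  have hndvd : ∀ k : ℕ, 0 < k → k < p → ¬ ((p:ℤ) ∣ (k:ℤ)) := by
    intro k hk0 hkp hdvd
    have h1 : p ∣ k := Int.ofNat_dvd.mp hdvd
    have := Nat.le_of_dvd hk0 h1
    omega
  have h3 : ¬ ((p:ℤ)) ∣ 3 := by
    intro h
    have h1 : p ∣ 3 := by exact_mod_cast h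
    have := Nat.le_of_dvd (by norm_num) h1
    omega
  have h5 : ¬ ((p:ℤ)) ∣ 5 := by
    intro h
    have h1 : p ∣ 5 := by exact_mod_cast h
    have := Nat.le_of_dvd (by norm_num) h1
    omega
  have h8 : ¬ ((p:ℤ)) ∣ 8 := by
    intro h
    have h1 : p ∣ 8 := by exact_mod_cast h
    have h2 := Nat.le_of_dvd (by norm_num) h1
    interval_cases p
    · revert h1; decide
    · revert h1; decide
    · exact absurd hp (by decide)
  have hPx : ¬ ((p:ℤ)) ∣ x := by
    intro hx
    obtain ⟨e, he⟩ := hx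
    have h5y : ((p:ℤ)) ∣ 5*y^2 := ⟨8 - 3*(p:ℤ)*e^2, by linear_combination hxy - 3*(x + (p:ℤ)*e)*he⟩
    have hy : ((p:ℤ)) ∣ y := hP.dvd_of_dvd_pow ((hP.dvd_mul.mp h5y).resolve_left h5)
    obtain ⟨f, hf⟩ := hy
    have h8' : ((p:ℤ)) * 8 = ((p:ℤ)) * (((p:ℤ)) * (3*e^2 + 5*f^2)) := by
      linear_combination -hxy + 3*(x + (p:ℤ)*e)*he + 5*(y + (p:ℤ)*f)*hf
    have : (8:ℤ) = ((p:ℤ)) * (3*e^2 + 5*f^2) :=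
      mul_left_cancel₀ hP.ne_zero h8'
    exact h8 ⟨_, this⟩
  have hdd : ((p:ℤ)) ∣ (x*a + 5*y*b) * (x*a - 5*y*b) := by
    have key : 3*((x*a + 5*y*b) * (x*a - 5*y*b)) = ((p:ℤ))*(8*a^2 - 5*y^2) := by
      linear_combination a^2 * hxy + 5*y^2 * hab
    have hd3 : ((p:ℤ)) ∣ 3*((x*a + 5*y*b) * (x*a - 5*y*b)) := ⟨8*a^2 - 5*y^2, key⟩
    exact (hP.dvd_mul.mp hd3).resolve_left h3
  rcases hP.dvd_mul.mp hdd with hc | hc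
  · obtain ⟨c, d, hcc, hdd', hx', hy'⟩ := solveCase (p:ℤ) a b x y hP hPx hab hxy hc
    exact ⟨c, d, hcc, hdd', Or.inl ⟨hx', hy'⟩⟩
  · have hab' : ((p:ℤ)) = a^2 + 15*(-b)^2 := by linear_combination hab
    have hc' : ((p:ℤ)) ∣ (x*a + 5*y*(-b)) := by
      have he : x*a + 5*y*(-b) = x*a - 5*y*b := by ring
      rw [he]; exact hc
    obtain ⟨c, d, hcc, hdd', hx', hy'⟩ := solveCase (p:ℤ) a (-b) x y hP hPx hab' hxy hc'
    refine ⟨c, d, hcc, hdd', Or.inr ⟨?_, ?_⟩⟩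
    · linear_combination hx'
    · linear_combination hy'

private def nm (n : ℤ) : ℤ := if n % 4 = 1 then n else -n

private lemma nm_mod (n : ℤ) (h : n % 2 = 1) : nm n % 4 = 1 := by
  unfold nm; split_ifs with h' <;> omega

private lemma nm_sq (n : ℤ) : (nm n)^2 = n^2 := by
  unfold nm; split_ifs <;> ring

private lemma eq_nm (x n : ℤ) (h4 : x % 4 = 1) (h : x = n ∨ x = -n) : x = nm n := by
  unfold nm; split_ifs with h' <;> omega

private lemma nm_mul (u v : ℤ) (hu : u % 2 = 1) (hv : v % 2 = 1) (huv : (u*v) % 4 = 1) :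
    nm u * nm v = u * v := by
  have h1 := Int.mul_emod u v 4
  unfold nm
  split_ifs with h h' h'
  · rfl
  · exfalso
    have hv4 : v % 4 = 3 := by omega
    rw [h, hv4] at h1; omega
  · exfalso
    have hu4 : u % 4 = 3 := by omega
    rw [hu4, h'] at h1; omega
  · ring

/-- `lam a b N` is λ(a, b; N+1): the finite sum of x·y over all integer pairs (x, y)
with x ≡ y ≡ 1 (mod 4) and a·x² + b·y² = 8N + a + b. -/
noncomputable def lam (a b N : ℤ) : ℤ :=
  ∑ᶠ xy ∈ {xy : ℤ × ℤ | xy.1 % 4 = 1 ∧ xy.2 % 4 = 1 ∧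
      a * xy.1 ^ 2 + b * xy.2 ^ 2 = 8 * N + a + b}, xy.1 * xy.2
private lemma prodmod (P a b : ℤ) (hab : P = a^2 + 15*b^2) (hP2 : P % 2 = 1) :
    ((a+5*b)*(a-3*b)) % 4 = 1 ∧ ((a-5*b)*(a+3*b)) % 4 = 1 := by
  have ha := sqpar a
  have hb := sqpar b
  rcases (by omega : a % 2 = 0 ∨ a % 2 = 1) with h|h
  · have hb1 : b % 2 = 1 := by omega
    obtain ⟨k, hk⟩ : ∃ k, a = 2*k := ⟨a/2, by omega⟩
    obtain ⟨m, hm⟩ : ∃ m, b = 2*m+1 := ⟨b/2, by omega⟩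
    subst hk hm
    constructor
    · have e : (2*k+5*(2*m+1))*(2*k-3*(2*m+1)) = 4*(k^2+2*(k*m)+k-15*m^2-15*m-4)+1 := by ring
      rw [e]; omega
    · have e : (2*k-5*(2*m+1))*(2*k+3*(2*m+1)) = 4*(k^2-2*(k*m)-k-15*m^2-15*m-4)+1 := by ring
      rw [e]; omega
  · have hb1 : b % 2 = 0 := by omega
    obtain ⟨k, hk⟩ : ∃ k, a = 2*k+1 := ⟨a/2, by omega⟩
    obtain ⟨m, hm⟩ : ∃ m, b = 2*m := ⟨b/2, by omega⟩
    subst hk hm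
    constructor
    · have e : (2*k+1+5*(2*m))*(2*k+1-3*(2*m)) = 4*(k^2+k+2*(k*m)+m-15*m^2)+1 := by ring
      rw [e]; omega
    · have e : (2*k+1-5*(2*m))*(2*k+1+3*(2*m)) = 4*(k^2+k-2*(k*m)-m-15*m^2)+1 := by ring
      rw [e]; omega

private lemma lam_eq (p : ℕ) (hp : p.Prime) (hp5 : 5 < p) (a b : ℤ)
    (hab : (p:ℤ) = a^2 + 15*b^2) :
    lam 3 5 ((p:ℤ) - 1) = 4*a^2 - 2*(p:ℤ) := by
  have hp2n : p % 2 = 1 := Nat.odd_iff.mp (hp.odd_of_ne_two (by omega))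
  have hP2 : (p:ℤ) % 2 = 1 := by omega
  have spa := sqpar a
  have spb := sqpar b
  have hau : (a+5*b) % 2 = 1 := by omega
  have hav : (a-3*b) % 2 = 1 := by omega
  have has : (a-5*b) % 2 = 1 := by omega
  have hat : (a+3*b) % 2 = 1 := by omega
  obtain ⟨hm1, hm2⟩ := prodmod (p:ℤ) a b hab hP2
  have ha0 : a ≠ 0 := by
    rintro rfl
    have h1 : (3:ℤ) ∣ (p:ℤ) := ⟨5*b^2, by linarith⟩
    have h2 : (3:ℕ) ∣ p := by exact_mod_cast h1
    rcases hp.eq_one_or_self_of_dvd 3 h2 with h|h <;> omega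
  have hb0 : b ≠ 0 := by
    rintro rfl
    have h1 : ((a.natAbs * a.natAbs : ℕ) : ℤ) = (p:ℤ) := by
      push_cast
      rw [abs_mul_abs_self]
      linear_combination -hab
    have h2 : a.natAbs * a.natAbs = p := by exact_mod_cast h1
    rcases hp.eq_one_or_self_of_dvd a.natAbs ⟨a.natAbs, h2.symm⟩ with h|h
    · rw [h] at h2; omega
    · rw [h] at h2; nlinarith [hp.two_le]
  have hneq : ((nm (a+5*b), nm (a-3*b)) : ℤ × ℤ) ≠ (nm (a-5*b), nm (a+3*b)) := by
    intro hEq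
    have h1 : nm (a+5*b) = nm (a-5*b) := congrArg Prod.fst hEq
    have h2 : (a+5*b)^2 = (a-5*b)^2 := by
      rw [← nm_sq (a+5*b), ← nm_sq (a-5*b), h1]
    have h3 : a*b = 0 := by
      have h4 : 20*(a*b) = 0 := by linear_combination h2
      omega
    rcases mul_eq_zero.mp h3 with h|h
    · exact ha0 h
    · exact hb0 h
  have hset : {xy : ℤ × ℤ | xy.1 % 4 = 1 ∧ xy.2 % 4 = 1 ∧
        3 * xy.1 ^ 2 + 5 * xy.2 ^ 2 = 8 * ((p:ℤ) - 1) + 3 + 5}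
      = {(nm (a+5*b), nm (a-3*b)), (nm (a-5*b), nm (a+3*b))} := by
    ext ⟨x, y⟩
    simp only [Set.mem_setOf_eq, Set.mem_insert_iff, Set.mem_singleton_iff, Prod.mk.injEq]
    constructor
    · rintro ⟨hx, hy, hxy⟩
      have hxy' : 3*x^2 + 5*y^2 = 8*(p:ℤ) := by linarith
      obtain ⟨c, d, hc, hd, hcase⟩ := classify p hp hp5 a b x y hab hxy'
      rcases hcase with ⟨hx', hy'⟩ | ⟨hx', hy'⟩ <;> rcases hc with rfl|rfl <;> rcases hd with rfl|rfl
      · -- f1 (1,1): x = a-5b, y = a+3b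
        exact Or.inr ⟨eq_nm x _ hx (Or.inl (by linear_combination hx')),
          eq_nm y _ hy (Or.inl (by linear_combination hy'))⟩
      · -- f1 (1,-1): x = a+5b, y = -(a-3b)
        exact Or.inl ⟨eq_nm x _ hx (Or.inl (by linear_combination hx')),
          eq_nm y _ hy (Or.inr (by linear_combination hy'))⟩
      · -- f1 (-1,1): x = -(a+5b), y = a-3b
        exact Or.inl ⟨eq_nm x _ hx (Or.inr (by linear_combination hx')),
          eq_nm y _ hy (Or.inl (by linear_combination hy'))⟩
      · -- f1 (-1,-1): x = -(a-5b), y = -(a+3b)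
        exact Or.inr ⟨eq_nm x _ hx (Or.inr (by linear_combination hx')),
          eq_nm y _ hy (Or.inr (by linear_combination hy'))⟩
      · -- f2 (1,1): x = a+5b, y = a-3b
        exact Or.inl ⟨eq_nm x _ hx (Or.inl (by linear_combination hx')),
          eq_nm y _ hy (Or.inl (by linear_combination hy'))⟩
      · -- f2 (1,-1): x = a-5b, y = -(a+3b)
        exact Or.inr ⟨eq_nm x _ hx (Or.inl (by linear_combination hx')),
          eq_nm y _ hy (Or.inr (by linear_combination hy'))⟩
      · -- f2 (-1,1): x = -(a-5b), y = a+3b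
        exact Or.inr ⟨eq_nm x _ hx (Or.inr (by linear_combination hx')),
          eq_nm y _ hy (Or.inl (by linear_combination hy'))⟩
      · -- f2 (-1,-1): x = -(a+5b), y = -(a-3b)
        exact Or.inl ⟨eq_nm x _ hx (Or.inr (by linear_combination hx')),
          eq_nm y _ hy (Or.inr (by linear_combination hy'))⟩
    · rintro (⟨rfl, rfl⟩ | ⟨rfl, rfl⟩)
      · refine ⟨nm_mod _ hau, nm_mod _ hav, ?_⟩
        rw [nm_sq, nm_sq]
        linear_combination (-8) * hab
      · refine ⟨nm_mod _ has, nm_mod _ hat, ?_⟩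
        rw [nm_sq, nm_sq]
        linear_combination (-8) * hab
  unfold lam
  rw [hset, finsum_mem_pair hneq]
  simp only
  rw [nm_mul _ _ hau hav hm1, nm_mul _ _ has hat hm2]
  linear_combination 2 * hab

theorem stmt15 (p : ℕ) (hp : p.Prime) (hp5 : 5 < p) :
    (¬ (p % 30 = 1 ∨ p % 30 = 19) → lam 3 5 ((p : ℤ) - 1) = 0) ∧
    ((p % 30 = 1 ∨ p % 30 = 19) →
      (∃ x y : ℤ, (p : ℤ) = x ^ 2 + 15 * y ^ 2) ∧
      ∀ x y : ℤ, (p : ℤ) = x ^ 2 + 15 * y ^ 2 →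
        lam 3 5 ((p : ℤ) - 1) = 4 * x ^ 2 - 2 * (p : ℤ)) := by
  have hp2n : p % 2 = 1 := Nat.odd_iff.mp (hp.odd_of_ne_two (by omega))
  have h3d : ¬ (3 ∣ p) := by
    intro h; rcases hp.eq_one_or_self_of_dvd 3 h with h'|h' <;> omega
  have h5d : ¬ (5 ∣ p) := by
    intro h; rcases hp.eq_one_or_self_of_dvd 5 h with h'|h' <;> omega
  constructor
  · intro hmod
    have hset : {xy : ℤ × ℤ | xy.1 % 4 = 1 ∧ xy.2 % 4 = 1 ∧
        3 * xy.1 ^ 2 + 5 * xy.2 ^ 2 = 8 * ((p:ℤ) - 1) + 3 + 5} = (∅ : Set (ℤ × ℤ)) := by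
      ext ⟨x, y⟩
      simp only [Set.mem_setOf_eq, Set.mem_empty_iff_false, iff_false]
      rintro ⟨hx, hy, hxy⟩
      have s3y := sq3 y
      have s5x := sq5 x
      exact hmod (by omega)
    unfold lam
    rw [hset, finsum_mem_empty]
  · intro hmod
    have h3 : p % 3 = 1 := by omega
    have h5 : p % 5 = 1 ∨ p % 5 = 4 := by omega
    obtain ⟨a, b, hab⟩ := repr15 p hp hp5 h3 h5
    refine ⟨⟨a, b, hab⟩, ?_⟩
    intro x y hxy
    exact lam_eq p hp hp5 x y hxy
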